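/- arXiv:2306.07658 — 2 statements merged into one kernel-verified Lean document; each statement's English description precedes it below -/
import Mathlib

section
/- Under the persistence condition (WF) (times t_n with τ ≤ t_n − t_{n−1} ≤ T and ∫_{t_{n−1}}^{t_n} α ≥ ᾱ > 0), every solution of the delayed weighted Hegselmann-Krause system converges exponentially to consensus without any smallness condition on the delay τ: there exists γ̃ > 0, independent of N, such that d(t) ≤ (max_{i,j} max_{r,s∈[−τ,0]} |x_i(r) − x_j(s)|) e^{−γ̃ (t − 3T + τ)} for all t ≥ 0. -/
open Set Filter Topology
open scoped RealInnerProductSpace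

lemma barrier_neg {h : ℝ → ℝ} {a b : ℝ}
    (hcont : ContinuousOn h (Set.Icc a b))
    (hder : ∀ t ∈ Set.Ioc a b, h t = 0 → ∃ d < (0:ℝ), HasDerivAt h d t)
    (ha0 : h a < 0) : ∀ t ∈ Set.Icc a b, h t < 0 := by
  by_contra hcon
  push_neg at hcon
  obtain ⟨t₁, ht₁, ht₁0⟩ := hcon
  set S : Set ℝ := {t ∈ Set.Icc a b | 0 ≤ h t} with hS
  have hSne : S.Nonempty := ⟨t₁, ht₁, ht₁0⟩
  have hSclosed : IsClosed S := by
    have := hcont.preimage_isClosed_of_isClosed isClosed_Icc (isClosed_Ici (a := (0:ℝ)))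
    exact this
  have hSbdd : BddBelow S := ⟨a, fun s hs => hs.1.1⟩
  set c := sInf S with hc
  have hcS : c ∈ S := hSclosed.csInf_mem hSne hSbdd
  have hcab : c ∈ Set.Icc a b := hcS.1
  have hac : a < c := by
    rcases lt_or_eq_of_le hcab.1 with h' | h'
    · exact h'
    · exfalso; rw [← h'] at hcS; exact absurd hcS.2 (not_le.mpr ha0)
  have hneg : ∀ s ∈ Set.Ico a c, h s < 0 := by
    intro s hs
    by_contra hh
    push_neg at hh
    have : s ∈ S := ⟨⟨hs.1, hs.2.le.trans hcab.2⟩, hh⟩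
    exact absurd (csInf_le hSbdd this) (not_le.mpr hs.2)
  -- h c = 0
  have hle : h c ≤ 0 := by
    have hcw : ContinuousWithinAt h (Set.Ico a c) c :=
      (hcont c hcab).mono (fun s hs => ⟨hs.1, hs.2.le.trans hcab.2⟩)
    have hne : (𝓝[Set.Ico a c] c).NeBot := by
      refine mem_closure_iff_nhdsWithin_neBot.mp ?_
      rw [closure_Ico hac.ne]
      exact ⟨hcab.1, le_rfl⟩
    exact le_of_tendsto hcw (eventually_nhdsWithin_of_forall fun s hs => (hneg s hs).le)
  have hc0 : h c = 0 := le_antisymm hle hcS.2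
  obtain ⟨d, hd, hdd⟩ := hder c ⟨hac, hcab.2⟩ hc0
  have hslope := hasDerivAt_iff_tendsto_slope.mp hdd
  have hslope' : Tendsto (slope h c) (𝓝[<] c) (𝓝 d) :=
    hslope.mono_left (nhdsWithin_mono c (fun s hs => ne_of_lt hs))
  have hev : ∀ᶠ s in 𝓝[<] c, slope h c s < 0 :=
    hslope'.eventually_lt_const hd
  have hev2 : ∀ᶠ s in 𝓝[<] c, s ∈ Set.Ioo a c :=
    Ioo_mem_nhdsLT_of_mem ⟨hac, le_rfl⟩
  have hne : (𝓝[<] c).NeBot := by infer_instance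
  obtain ⟨s, hs1, hs2⟩ := (hev.and hev2).exists
  have hsc : s < c := hs2.2
  have hsl : slope h c s = h s / (s - c) := by
    simp [slope_def_field, hc0]
  rw [hsl] at hs1
  have hhs : 0 < h s := by
    have hsc' : s - c < 0 := by linarith
    by_contra hnp
    push_neg at hnp
    have : 0 ≤ h s / (s - c) := div_nonneg_of_nonpos hnp hsc'.le
    linarith
  exact absurd (hneg s ⟨hs2.1.le, hsc⟩) (by push_neg; exact hhs.le)

section HKproof
variable {dim N : ℕ} {τ : ℝ}
    {ψ : EuclideanSpace ℝ (Fin dim) → EuclideanSpace ℝ (Fin dim) → ℝ}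
    {α : ℝ → ℝ} {x : Fin N → ℝ → EuclideanSpace ℝ (Fin dim)} {K R ψ₀ abar : ℝ}

variable {dim N : ℕ} {τ : ℝ}
    {ψ : EuclideanSpace ℝ (Fin dim) → EuclideanSpace ℝ (Fin dim) → ℝ}
    {α : ℝ → ℝ} {x : Fin N → ℝ → EuclideanSpace ℝ (Fin dim)} {K : ℝ}

lemma hk_inv (hτ : 0 < τ)
    (hψpos : ∀ y z, 0 < ψ y z)
    (hK0 : 0 < K)
    (hα01 : ∀ t, α t ∈ Set.Icc (0:ℝ) 1)
    (hxcont : ∀ i, ContinuousOn (x i) (Set.Ici (-τ)))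
    (hode : ∀ i t, 0 < t → HasDerivAt (x i)
      ((α t / ((N : ℝ) - 1)) •
        ∑ j ∈ Finset.univ.filter (fun j => j ≠ i),
          ψ (x i t) (x j (t - τ)) • (x j (t - τ) - x i t)) t)
    (hN1 : (0:ℝ) < (N:ℝ) - 1)
    (v : EuclideanSpace ℝ (Fin dim)) (a : ℝ) (ha : 0 ≤ a) (M : ℝ)
    (hM : ∀ j s, s ∈ Set.Icc (a-τ) a → ⟪v, x j s⟫ ≤ M) :
    ∀ i t, a - τ ≤ t → ⟪v, x i t⟫ ≤ M := by
  have hg : ∀ (i : Fin N) (t : ℝ), 0 < t → HasDerivAt (fun s => ⟪v, x i s⟫)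
      ((α t / ((N:ℝ)-1)) * ∑ j ∈ Finset.univ.filter (fun j => j ≠ i),
        ψ (x i t) (x j (t-τ)) * (⟪v, x j (t-τ)⟫ - ⟪v, x i t⟫)) t := by
    intro i t ht
    have h2 := ((innerSL ℝ v).hasFDerivAt).comp_hasDerivAt t (hode i t ht)
    refine h2.congr_deriv ?_
    simp [real_inner_smul_right, inner_sum, inner_sub_right, Finset.mul_sum]
  have hgc : ∀ i : Fin N, ContinuousOn (fun s => ⟪v, x i s⟫) (Set.Ici (-τ)) :=
    fun i => ContinuousOn.inner continuousOn_const (hxcont i)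
  have key : ∀ k : ℕ, ∀ i t, a - τ ≤ t → t ≤ a + k * τ → ⟪v, x i t⟫ ≤ M := by
    intro k
    induction k with
    | zero =>
      intro i t h1 h2
      exact hM i t ⟨h1, by simpa using h2⟩
    | succ k ih =>
      intro i t h1 h2
      by_cases hcase : t ≤ a + k * τ
      · exact ih i t h1 hcase
      push_neg at hcase
      set a₀ := a + k * τ with ha₀
      have ha₀0 : 0 ≤ a₀ := by
        have : 0 ≤ (k:ℝ) * τ := by positivity
        linarith
      have hmain : ∀ ε, 0 < ε → ⟪v, x i t⟫ - M < ε * Real.exp (K * (t - a₀)) := by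
        intro ε hε
        set h : ℝ → ℝ := fun s => ⟪v, x i s⟫ - M - ε * Real.exp (K * (s - a₀)) with hh
        have hc : ContinuousOn h (Set.Icc a₀ t) := by
          apply ContinuousOn.sub
          · apply ContinuousOn.sub
            · exact (hgc i).mono (fun s hs => by
                simp only [Set.mem_Ici, Set.mem_Icc] at *; linarith [hs.1])
            · exact continuousOn_const
          · exact (continuous_const.mul (Real.continuous_exp.comp
                (continuous_const.mul (continuous_id.sub continuous_const)))).continuousOn
        have hd : ∀ s ∈ Set.Ioc a₀ t, h s = 0 → ∃ d < (0:ℝ), HasDerivAt h d s := by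
          intro s hs hs0
          have hs0' : ⟪v, x i s⟫ = M + ε * Real.exp (K * (s - a₀)) := by
            simp only [hh] at hs0; linarith
          have hspos : 0 < s := lt_of_le_of_lt ha₀0 hs.1
          have hder1 := hg i s hspos
          have hexp : HasDerivAt (fun u : ℝ => K * (u - a₀)) K s := by
            simpa using ((hasDerivAt_id s).sub_const a₀).const_mul K
          have hder2 : HasDerivAt (fun u => ε * Real.exp (K * (u - a₀)))
              (ε * (Real.exp (K * (s - a₀)) * K)) s := (hexp.exp).const_mul ε
          refine ⟨_, ?_, (hder1.sub_const M).sub hder2⟩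
          have hepos : 0 < ε * (Real.exp (K * (s - a₀)) * K) := by positivity
          have hDnp : (α s / ((N:ℝ)-1)) * ∑ j ∈ Finset.univ.filter (fun j => j ≠ i),
              ψ (x i s) (x j (s-τ)) * (⟪v, x j (s-τ)⟫ - ⟪v, x i s⟫) ≤ 0 := by
            apply mul_nonpos_of_nonneg_of_nonpos
            · exact div_nonneg (hα01 s).1 (le_of_lt hN1)
            · apply Finset.sum_nonpos
              intro j hj
              apply mul_nonpos_of_nonneg_of_nonpos (le_of_lt (hψpos _ _))
              have hk2 : t ≤ a₀ + τ := by
                have : ((k:ℝ)+1) * τ = (k:ℝ) * τ + τ := by ring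
                push_cast at h2
                linarith
              have hjs : ⟪v, x j (s-τ)⟫ ≤ M := by
                apply ih j (s-τ)
                · have : 0 ≤ (k:ℝ) * τ := by positivity
                  linarith [hs.1]
                · linarith [hs.2]
              have : 0 < ε * Real.exp (K * (s - a₀)) := by positivity
              rw [hs0']
              linarith
          linarith
        have hstart : h a₀ < 0 := by
          have hia : ⟪v, x i a₀⟫ ≤ M := by
            have hkτ : 0 ≤ (k:ℝ) * τ := by positivity
            apply ih i a₀ (by linarith) (le_refl a₀)
          simp only [hh, sub_self, mul_zero, Real.exp_zero, mul_one]
          linarith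
        have := barrier_neg hc hd hstart t ⟨le_of_lt hcase, le_rfl⟩
        simp only [hh] at this
        linarith
      by_contra hcon
      push_neg at hcon
      have hexp : (0:ℝ) < Real.exp (K * (t - a₀)) := Real.exp_pos _
      have hd := hmain ((⟪v, x i t⟫ - M) / Real.exp (K * (t - a₀)))
        (div_pos (by linarith) hexp)
      rw [div_mul_cancel₀] at hd
      · linarith
      · exact ne_of_gt hexp
  intro i t ht
  obtain ⟨k, hk⟩ := exists_nat_ge ((t - a)/τ)
  refine key k i t ht ?_
  rw [div_le_iff₀ hτ] at hk
  linarith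


variable {dim N : ℕ} {τ : ℝ}
    {ψ : EuclideanSpace ℝ (Fin dim) → EuclideanSpace ℝ (Fin dim) → ℝ}
    {α : ℝ → ℝ} {x : Fin N → ℝ → EuclideanSpace ℝ (Fin dim)} {K : ℝ}

lemma hk_mem (hτ : 0 < τ)
    (hψpos : ∀ y z, 0 < ψ y z)
    (hK : ∀ y z, ψ y z ≤ K)
    (hK0 : 0 < K)
    (hα01 : ∀ t, α t ∈ Set.Icc (0:ℝ) 1)
    (hxcont : ∀ i, ContinuousOn (x i) (Set.Ici (-τ)))
    (hode : ∀ i t, 0 < t → HasDerivAt (x i)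
      ((α t / ((N : ℝ) - 1)) •
        ∑ j ∈ Finset.univ.filter (fun j => j ≠ i),
          ψ (x i t) (x j (t - τ)) • (x j (t - τ) - x i t)) t)
    (hN1 : (0:ℝ) < (N:ℝ) - 1)
    (hkinv : ∀ (v : EuclideanSpace ℝ (Fin dim)) (a : ℝ), 0 ≤ a → ∀ M : ℝ,
      (∀ j s, s ∈ Set.Icc (a-τ) a → ⟪v, x j s⟫ ≤ M) →
      ∀ i t, a - τ ≤ t → ⟪v, x i t⟫ ≤ M)
    (v : EuclideanSpace ℝ (Fin dim)) (a : ℝ) (ha : 0 ≤ a) (m : ℝ)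
    (hm : ∀ j s, s ∈ Set.Icc (a-τ) a → m ≤ ⟪v, x j s⟫) :
    ∀ i t, a ≤ t → m + (⟪v, x i a⟫ - m) * Real.exp (-(K * (t - a))) ≤ ⟪v, x i t⟫ := by
  have hlow : ∀ (j : Fin N) s, a - τ ≤ s → m ≤ ⟪v, x j s⟫ := by
    intro j s hs
    have := hkinv (-v) a ha (-m)
      (fun j s hs => by rw [inner_neg_left]; linarith [hm j s hs]) j s hs
    rw [inner_neg_left] at this; linarith
  have hg : ∀ (i : Fin N) (t : ℝ), 0 < t → HasDerivAt (fun s => ⟪v, x i s⟫)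
      ((α t / ((N:ℝ)-1)) * ∑ j ∈ Finset.univ.filter (fun j => j ≠ i),
        ψ (x i t) (x j (t-τ)) * (⟪v, x j (t-τ)⟫ - ⟪v, x i t⟫)) t := by
    intro i t ht
    have h2 := ((innerSL ℝ v).hasFDerivAt).comp_hasDerivAt t (hode i t ht)
    refine h2.congr_deriv ?_
    simp [real_inner_smul_right, inner_sum, inner_sub_right, Finset.mul_sum]
  have hcard : ∀ i : Fin N, ((Finset.univ.filter (fun j => j ≠ i)).card : ℝ) = (N:ℝ) - 1 := by
    intro i
    have hNpos : 1 ≤ N := by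
      rcases Nat.eq_zero_or_pos N with h | h
      · subst h; norm_num at hN1
      · exact h
    rw [Finset.filter_ne', Finset.card_erase_of_mem (Finset.mem_univ i), Finset.card_univ,
      Fintype.card_fin, Nat.cast_sub hNpos, Nat.cast_one]
  intro i t hat
  rcases eq_or_lt_of_le hat with rfl | hat'
  · simp
  set F : ℝ → ℝ := fun s => (⟪v, x i s⟫ - m) * Real.exp (K * (s - a)) with hF
  have hgion : ∀ s : ℝ, a ≤ s → -τ ≤ s := fun s hs => by linarith
  have hFd : ∀ s ∈ Set.Ioo a t, HasDerivAt F
      (((α s / ((N:ℝ)-1)) * ∑ j ∈ Finset.univ.filter (fun j => j ≠ i),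
        ψ (x i s) (x j (s-τ)) * (⟪v, x j (s-τ)⟫ - ⟪v, x i s⟫)) * Real.exp (K * (s - a))
        + (⟪v, x i s⟫ - m) * (Real.exp (K * (s - a)) * K)) s := by
    intro s hs
    have hspos : 0 < s := lt_of_le_of_lt ha hs.1
    have hexp : HasDerivAt (fun u : ℝ => Real.exp (K * (u - a))) (Real.exp (K * (s - a)) * K) s := by
      have : HasDerivAt (fun u : ℝ => K * (u - a)) K s := by
        simpa using ((hasDerivAt_id s).sub_const a).const_mul K
      exact this.exp
    exact ((hg i s hspos).sub_const m).mul hexp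
  have hFmono : MonotoneOn F (Set.Icc a t) := by
    apply monotoneOn_of_deriv_nonneg (convex_Icc a t)
    · apply ContinuousOn.mul
      · apply ContinuousOn.sub _ continuousOn_const
        exact (ContinuousOn.inner continuousOn_const (hxcont i)).mono
          (fun s hs => by simp only [Set.mem_Ici, Set.mem_Icc] at *; linarith [hs.1])
      · exact (Real.continuous_exp.comp
          (continuous_const.mul (continuous_id.sub continuous_const))).continuousOn
    · rw [interior_Icc]
      intro s hs
      exact ((hFd s hs).differentiableAt).differentiableWithinAt
    · rw [interior_Icc]
      intro s hs
      rw [(hFd s hs).deriv]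
      have hspos : 0 < s := lt_of_le_of_lt ha hs.1
      -- show derivative nonneg
      have hsum : ((α s / ((N:ℝ)-1)) * ∑ j ∈ Finset.univ.filter (fun j => j ≠ i),
          ψ (x i s) (x j (s-τ)) * (⟪v, x j (s-τ)⟫ - ⟪v, x i s⟫)) ≥ -(K * (⟪v, x i s⟫ - m)) := by
        have hw : m ≤ ⟪v, x i s⟫ := hlow i s (by linarith [hs.1])
        have hterm : ∀ j ∈ Finset.univ.filter (fun j => j ≠ i),
            K * (m - ⟪v, x i s⟫) ≤ ψ (x i s) (x j (s-τ)) * (⟪v, x j (s-τ)⟫ - ⟪v, x i s⟫) := by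
          intro j hj
          have h1 : m ≤ ⟪v, x j (s-τ)⟫ := hlow j (s-τ) (by linarith [hs.1])
          have h2 : ψ (x i s) (x j (s-τ)) * (m - ⟪v, x i s⟫)
              ≤ ψ (x i s) (x j (s-τ)) * (⟪v, x j (s-τ)⟫ - ⟪v, x i s⟫) := by
            apply mul_le_mul_of_nonneg_left (by linarith) (le_of_lt (hψpos _ _))
          have h3 : K * (m - ⟪v, x i s⟫) ≤ ψ (x i s) (x j (s-τ)) * (m - ⟪v, x i s⟫) := by
            apply mul_le_mul_of_nonpos_right (hK _ _) (by linarith)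
          linarith
        have hsum2 := Finset.card_nsmul_le_sum _ _ _ hterm
        rw [nsmul_eq_mul] at hsum2
        rw [hcard i] at hsum2
        have hαs := hα01 s
        have h4 : (α s / ((N:ℝ)-1)) * (((N:ℝ)-1) * (K * (m - ⟪v, x i s⟫)))
            ≤ (α s / ((N:ℝ)-1)) * ∑ j ∈ Finset.univ.filter (fun j => j ≠ i),
              ψ (x i s) (x j (s-τ)) * (⟪v, x j (s-τ)⟫ - ⟪v, x i s⟫) := by
          apply mul_le_mul_of_nonneg_left hsum2 (div_nonneg hαs.1 hN1.le)
        have h5 : (α s / ((N:ℝ)-1)) * (((N:ℝ)-1) * (K * (m - ⟪v, x i s⟫)))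
            = α s * (K * (m - ⟪v, x i s⟫)) := by
          field_simp
        rw [h5] at h4
        nlinarith [hαs.1, hαs.2, mul_nonneg hK0.le (sub_nonneg.mpr hw)]
      have hexp0 : 0 < Real.exp (K * (s - a)) := Real.exp_pos _
      have hw : m ≤ ⟪v, x i s⟫ := hlow i s (by linarith [hs.1])
      nlinarith [hsum, hexp0, mul_nonneg (sub_nonneg.mpr hw) hexp0.le]
  have hFle := hFmono (Set.left_mem_Icc.mpr hat) (Set.right_mem_Icc.mpr hat) hat
  simp only [hF, sub_self, mul_zero, Real.exp_zero, mul_one] at hFle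
  have hexp0 : (0:ℝ) < Real.exp (K * (t - a)) := Real.exp_pos _
  rw [Real.exp_neg]
  have hfin : (⟪v, x i a⟫ - m) * (Real.exp (K * (t - a)))⁻¹ ≤ ⟪v, x i t⟫ - m := by
    rw [← div_eq_mul_inv, div_le_iff₀ hexp0]
    linarith [hFle]
  linarith

variable {dim N : ℕ} {τ : ℝ}
    {ψ : EuclideanSpace ℝ (Fin dim) → EuclideanSpace ℝ (Fin dim) → ℝ}
    {α : ℝ → ℝ} {x : Fin N → ℝ → EuclideanSpace ℝ (Fin dim)} {K R ψ₀ abar : ℝ}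

set_option maxHeartbeats 1000000 in
lemma hk_pull (hτ : 0 < τ)
    (hψpos : ∀ y z, 0 < ψ y z)
    (hK : ∀ y z, ψ y z ≤ K)
    (hK0 : 0 < K)
    (hαcont : Continuous α)
    (hα01 : ∀ t, α t ∈ Set.Icc (0:ℝ) 1)
    (hxcont : ∀ i, ContinuousOn (x i) (Set.Ici (-τ)))
    (hode : ∀ i t, 0 < t → HasDerivAt (x i)
      ((α t / ((N : ℝ) - 1)) •
        ∑ j ∈ Finset.univ.filter (fun j => j ≠ i),
          ψ (x i t) (x j (t - τ)) • (x j (t - τ) - x i t)) t)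
    (hN1 : (0:ℝ) < (N:ℝ) - 1)
    (hcard : ∀ i : Fin N, ((Finset.univ.filter (fun j => j ≠ i)).card : ℝ) = (N:ℝ) - 1)
    (habar : 0 < abar)
    (hψ0pos : 0 < ψ₀)
    (hψ0 : ∀ y z, ‖y‖ ≤ R → ‖z‖ ≤ R → ψ₀ ≤ ψ y z)
    (hball : ∀ i t, -τ ≤ t → ‖x i t‖ ≤ R)
    (hkinv : ∀ (v : EuclideanSpace ℝ (Fin dim)) (a : ℝ), 0 ≤ a → ∀ M : ℝ,
      (∀ j s, s ∈ Set.Icc (a-τ) a → ⟪v, x j s⟫ ≤ M) →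
      ∀ i t, a - τ ≤ t → ⟪v, x i t⟫ ≤ M)
    (hkmem : ∀ (v : EuclideanSpace ℝ (Fin dim)) (a : ℝ), 0 ≤ a → ∀ m : ℝ,
      (∀ j s, s ∈ Set.Icc (a-τ) a → m ≤ ⟪v, x j s⟫) →
      ∀ i t, a ≤ t → m + (⟪v, x i a⟫ - m) * Real.exp (-(K * (t - a))) ≤ ⟪v, x i t⟫)
    (a A B : ℝ) (ha : 0 ≤ a) (haA : a + τ ≤ A) (hAB : A ≤ B)
    (hαint : abar ≤ ∫ s in A..B, α s)
    (v : EuclideanSpace ℝ (Fin dim)) (m : ℝ)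
    (hm : ∀ j s, s ∈ Set.Icc (a-τ) a → m ≤ ⟪v, x j s⟫) (j₀ : Fin N) :
    ∀ i t, B ≤ t →
      m + (min 1 (ψ₀ * abar / ((N:ℝ)-1))) * Real.exp (-(K * (t - a))) * (⟪v, x j₀ a⟫ - m)
        ≤ ⟪v, x i t⟫ := by
  set β₀ := min 1 (ψ₀ * abar / ((N:ℝ)-1)) with hβ₀
  have hβ₀1 : β₀ ≤ 1 := min_le_left _ _
  have hβ₀2 : β₀ ≤ ψ₀ * abar / ((N:ℝ)-1) := min_le_right _ _
  have hβ₀0 : 0 ≤ β₀ :=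
    le_min zero_le_one (div_nonneg (mul_nonneg hψ0pos.le habar.le) hN1.le)
  have hp : 0 ≤ ⟪v, x j₀ a⟫ - m := by
    have := hm j₀ a ⟨by linarith, le_rfl⟩; linarith
  set p := ⟪v, x j₀ a⟫ - m with hpdef
  have hlow : ∀ (j : Fin N) s, a - τ ≤ s → m ≤ ⟪v, x j s⟫ := by
    intro j s hs
    have := hkinv (-v) a ha (-m)
      (fun j s hs => by rw [inner_neg_left]; linarith [hm j s hs]) j s hs
    rw [inner_neg_left] at this; linarith
  have hg : ∀ (i : Fin N) (t : ℝ), 0 < t → HasDerivAt (fun s => ⟪v, x i s⟫)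
      ((α t / ((N:ℝ)-1)) * ∑ j ∈ Finset.univ.filter (fun j => j ≠ i),
        ψ (x i t) (x j (t-τ)) * (⟪v, x j (t-τ)⟫ - ⟪v, x i t⟫)) t := by
    intro i t ht
    have h2 := ((innerSL ℝ v).hasFDerivAt).comp_hasDerivAt t (hode i t ht)
    refine h2.congr_deriv ?_
    simp [real_inner_smul_right, inner_sum, inner_sub_right, Finset.mul_sum]
  intro i t hBt
  have hta : a ≤ t := by linarith
  by_cases hij : i = j₀
  · subst hij
    have hme := hkmem v a ha m hm i t hta
    have hexp0 : (0:ℝ) ≤ Real.exp (-(K * (t - a))) := (Real.exp_pos _).le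
    have hh : 0 ≤ (1 - β₀) * p * Real.exp (-(K * (t - a))) :=
      mul_nonneg (mul_nonneg (by linarith) hp) hexp0
    nlinarith [hme, hh]
  -- main case
  set Φ : ℝ → ℝ := fun s => ∫ u in A..s, α u with hΦ
  have hΦd : ∀ s : ℝ, HasDerivAt Φ (α s) s := fun s =>
    (hαcont.integral_hasStrictDerivAt A s).hasDerivAt
  set c : ℝ := ψ₀ * p / ((N:ℝ)-1) with hc
  have hc0 : 0 ≤ c := div_nonneg (mul_nonneg hψ0pos.le hp) hN1.le
  set H : ℝ → ℝ := fun s => (⟪v, x i s⟫ - m) * Real.exp (K * (s - a)) - c * Φ s with hH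
  have hHd : ∀ s ∈ Set.Ioo A t, HasDerivAt H
      (((α s / ((N:ℝ)-1)) * ∑ j ∈ Finset.univ.filter (fun j => j ≠ i),
        ψ (x i s) (x j (s-τ)) * (⟪v, x j (s-τ)⟫ - ⟪v, x i s⟫)) * Real.exp (K * (s - a))
        + (⟪v, x i s⟫ - m) * (Real.exp (K * (s - a)) * K) - c * α s) s := by
    intro s hs
    have hspos : 0 < s := by have := hs.1; linarith
    have hexp : HasDerivAt (fun u : ℝ => Real.exp (K * (u - a))) (Real.exp (K * (s - a)) * K) s := by
      have : HasDerivAt (fun u : ℝ => K * (u - a)) K s := by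
        simpa using ((hasDerivAt_id s).sub_const a).const_mul K
      exact this.exp
    exact (((hg i s hspos).sub_const m).mul hexp).sub ((hΦd s).const_mul c)
  have hHmono : MonotoneOn H (Set.Icc A t) := by
    apply monotoneOn_of_deriv_nonneg (convex_Icc A t)
    · apply ContinuousOn.sub
      · apply ContinuousOn.mul
        · apply ContinuousOn.sub _ continuousOn_const
          exact (ContinuousOn.inner continuousOn_const (hxcont i)).mono
            (fun s hs => by simp only [Set.mem_Ici, Set.mem_Icc] at *; linarith [hs.1])
        · exact (Real.continuous_exp.comp
            (continuous_const.mul (continuous_id.sub continuous_const))).continuousOn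
      · have hΦdiff : Differentiable ℝ Φ := fun s => (hΦd s).differentiableAt
        exact (continuous_const.mul hΦdiff.continuous).continuousOn
    · rw [interior_Icc]
      intro s hs
      exact ((hHd s hs).differentiableAt).differentiableWithinAt
    · rw [interior_Icc]
      intro s hs
      rw [(hHd s hs).deriv]
      have hspos : 0 < s := by have := hs.1; linarith
      have hsa : a ≤ s - τ := by have := hs.1; linarith
      have hw : m ≤ ⟪v, x i s⟫ := hlow i s (by linarith)
      have hj₀low : m + p * Real.exp (-(K * (s - τ - a))) ≤ ⟪v, x j₀ (s-τ)⟫ :=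
        hkmem v a ha m hm j₀ (s-τ) hsa
      have hψij : ψ₀ ≤ ψ (x i s) (x j₀ (s-τ)) :=
        hψ0 _ _ (hball i s (by linarith)) (hball j₀ (s-τ) (by linarith))
      -- sum lower bound
      have hterm : ∀ j ∈ Finset.univ.filter (fun j => j ≠ i),
          (if j = j₀ then ψ₀ * (p * Real.exp (-(K * (s - τ - a)))) else 0)
            - K * (⟪v, x i s⟫ - m)
          ≤ ψ (x i s) (x j (s-τ)) * (⟪v, x j (s-τ)⟫ - ⟪v, x i s⟫) := by
        intro j hj
        have hjm : m ≤ ⟪v, x j (s-τ)⟫ := hlow j (s-τ) (by linarith)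
        have hsplit : ψ (x i s) (x j (s-τ)) * (⟪v, x j (s-τ)⟫ - ⟪v, x i s⟫)
            = ψ (x i s) (x j (s-τ)) * (⟪v, x j (s-τ)⟫ - m)
              - ψ (x i s) (x j (s-τ)) * (⟪v, x i s⟫ - m) := by ring
        have h3 : ψ (x i s) (x j (s-τ)) * (⟪v, x i s⟫ - m) ≤ K * (⟪v, x i s⟫ - m) :=
          mul_le_mul_of_nonneg_right (hK _ _) (by linarith)
        by_cases hjj : j = j₀
        · subst hjj
          rw [if_pos rfl]
          have h4 : ψ₀ * (p * Real.exp (-(K * (s - τ - a))))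
              ≤ ψ (x i s) (x j (s-τ)) * (⟪v, x j (s-τ)⟫ - m) :=
            mul_le_mul hψij (by linarith)
              (mul_nonneg hp (Real.exp_pos _).le) (le_of_lt (hψpos _ _))
          linarith
        · rw [if_neg hjj]
          have h4 : 0 ≤ ψ (x i s) (x j (s-τ)) * (⟪v, x j (s-τ)⟫ - m) :=
            mul_nonneg (le_of_lt (hψpos _ _)) (by linarith)
          linarith
      have hsum := Finset.sum_le_sum hterm
      rw [Finset.sum_sub_distrib, Finset.sum_ite_eq' (Finset.univ.filter (fun j => j ≠ i)) j₀,
        Finset.sum_const, nsmul_eq_mul] at hsum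
      have hj₀mem : j₀ ∈ Finset.univ.filter (fun j => j ≠ i) := by
        simp [Finset.mem_filter]
        exact fun h => hij (h.symm)
      rw [if_pos hj₀mem, hcard i] at hsum
      -- now assemble
      have hαs := hα01 s
      have hdiv : 0 ≤ α s / ((N:ℝ)-1) := div_nonneg hαs.1 hN1.le
      have h5 := mul_le_mul_of_nonneg_left hsum hdiv
      have hE : (0:ℝ) < Real.exp (K * (s - a)) := Real.exp_pos _
      have hEτ : Real.exp (-(K * (s - τ - a))) * Real.exp (K * (s - a)) = Real.exp (K * τ) := by
        rw [← Real.exp_add]; ring_nf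
      have hKτ1 : (1:ℝ) ≤ Real.exp (K * τ) := by
        rw [← Real.exp_zero]
        exact Real.exp_le_exp.mpr (by positivity)
      -- final arithmetic
      set w : ℝ := ⟪v, x i s⟫ - m with hwdef
      have hw0 : 0 ≤ w := by simp only [hwdef]; linarith
      have e1 : (α s/((N:ℝ)-1)) * (ψ₀*(p*Real.exp (-(K*(s-τ-a)))) - (((N:ℝ)-1)*(K*w)))
          = c * α s * Real.exp (-(K*(s-τ-a))) - α s*K*w := by
        rw [hc]; field_simp
      rw [e1] at h5
      have h6 := mul_le_mul_of_nonneg_right h5 hE.le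
      have h7 : (c*α s*Real.exp (-(K*(s-τ-a))) - α s*K*w) * Real.exp (K*(s-a))
          = c*α s*Real.exp (K*τ) - α s*K*w*Real.exp (K*(s-a)) := by
        rw [← hEτ]; ring
      rw [h7] at h6
      have pos1 : 0 ≤ c * α s * (Real.exp (K*τ) - 1) :=
        mul_nonneg (mul_nonneg hc0 hαs.1) (by linarith)
      have pos2 : 0 ≤ K * w * Real.exp (K*(s-a)) * (1 - α s) :=
        mul_nonneg (mul_nonneg (mul_nonneg hK0.le hw0) hE.le) (sub_nonneg.mpr (hα01 s).2)
      generalize hS : (∑ i_1 ∈ Finset.univ.filter (fun j => j ≠ i),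
        ψ (x i s) (x i_1 (s - τ)) * (⟪v, x i_1 (s-τ)⟫ - ⟪v, x i s⟫)) = S at h6 ⊢
      generalize hE2 : Real.exp (K * (s - a)) = E2 at h6 pos2 ⊢
      generalize hE3 : Real.exp (K * τ) = E3 at h6 pos1 ⊢
      generalize hA2 : α s = al at h6 pos1 pos2 ⊢
      generalize hw2 : w = w2 at h6 pos1 pos2 ⊢
      generalize hc2 : c = c2 at h6 pos1 pos2 ⊢
      linarith only [h6, pos1, pos2]
  -- conclude from monotonicity
  have hHle := hHmono (Set.left_mem_Icc.mpr (by linarith)) (Set.right_mem_Icc.mpr (by linarith))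
    (by linarith : A ≤ t)
  have hΦA : Φ A = 0 := intervalIntegral.integral_same
  have hΦt : abar ≤ Φ t := by
    have h1 : Φ t = (∫ s in A..B, α s) + ∫ s in B..t, α s := by
      rw [hΦ]
      exact (intervalIntegral.integral_add_adjacent_intervals
        (hαcont.intervalIntegrable A B) (hαcont.intervalIntegrable B t)).symm
    have h2 : 0 ≤ ∫ s in B..t, α s :=
      intervalIntegral.integral_nonneg hBt (fun u _ => (hα01 u).1)
    linarith
  have hgA : m ≤ ⟪v, x i A⟫ := hlow i A (by linarith)
  simp only [hH, hΦA, mul_zero, sub_zero] at hHle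
  have hfin : c * abar ≤ (⟪v, x i t⟫ - m) * Real.exp (K * (t - a)) := by
    have h1 : 0 ≤ (⟪v, x i A⟫ - m) * Real.exp (K * (A - a)) :=
      mul_nonneg (by linarith [hgA]) (Real.exp_pos _).le
    linarith [hHle, h1, mul_le_mul_of_nonneg_left hΦt hc0]
  have hE : (0:ℝ) < Real.exp (K * (t - a)) := Real.exp_pos _
  have h7 : β₀ * p ≤ c * abar := by
    rw [hc]
    calc β₀ * p ≤ (ψ₀ * abar / ((N:ℝ)-1)) * p := mul_le_mul_of_nonneg_right hβ₀2 hp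
    _ = ψ₀ * p / ((N:ℝ)-1) * abar := by ring
  rw [Real.exp_neg]
  have h8 : β₀ * p ≤ (⟪v, x i t⟫ - m) * Real.exp (K * (t - a)) := le_trans h7 hfin
  have h9 : β₀ * p / Real.exp (K * (t - a)) ≤ ⟪v, x i t⟫ - m := (div_le_iff₀ hE).mpr h8
  have h10 : β₀ * (Real.exp (K * (t - a)))⁻¹ * p = β₀ * p / Real.exp (K * (t - a)) := by
    ring
  linarith [h9, h10.le, h10.ge]


variable {dim N : ℕ} {τ : ℝ} {x : Fin N → ℝ → EuclideanSpace ℝ (Fin dim)}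

lemma hk_max (hNpos : 0 < N)
    (hxcont : ∀ i, ContinuousOn (x i) (Set.Ici (-τ)))
    (v : EuclideanSpace ℝ (Fin dim)) (a b : ℝ) (hab : a ≤ b) (ha : -τ ≤ a) :
    ∃ (k : Fin N) (r : ℝ), r ∈ Set.Icc a b ∧
      ∀ (k' : Fin N) (r' : ℝ), r' ∈ Set.Icc a b → ⟪v, x k' r'⟫ ≤ ⟪v, x k r⟫ := by
  have hne : (Set.Icc a b).Nonempty := Set.nonempty_Icc.mpr hab
  have hprop : ∀ k : Fin N, ∃ r ∈ Set.Icc a b,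
      ∀ r' ∈ Set.Icc a b, ⟪v, x k r'⟫ ≤ ⟪v, x k r⟫ := by
    intro k
    have hcont : ContinuousOn (fun s => ⟪v, x k s⟫) (Set.Icc a b) :=
      ContinuousOn.inner continuousOn_const
        ((hxcont k).mono (fun s hs => le_trans ha hs.1))
    obtain ⟨r, hr, hmax⟩ := isCompact_Icc.exists_isMaxOn hne hcont
    exact ⟨r, hr, fun r' hr' => hmax hr'⟩
  choose r hr1 hr2 using hprop
  obtain ⟨kmax, -, hkmax⟩ := Finset.exists_max_image (Finset.univ : Finset (Fin N))
    (fun k => ⟪v, x k (r k)⟫) ⟨⟨0, hNpos⟩, Finset.mem_univ _⟩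
  exact ⟨kmax, r kmax, hr1 kmax,
    fun k' r' hr' => le_trans (hr2 k' r' hr') (hkmax k' (Finset.mem_univ _))⟩

end HKproof
set_option maxHeartbeats 2000000 in
/-- exponential convergence to consensus for the delayed weighted
Hegselmann-Krause system under (WF), with no smallness condition on the delay. -/
theorem hk_delay_exponential_consensus
    {dim N : ℕ} (hN : 2 ≤ N) (τ : ℝ) (hτ : 0 < τ)
    (ψ : EuclideanSpace ℝ (Fin dim) → EuclideanSpace ℝ (Fin dim) → ℝ)
    (hψpos : ∀ y z, 0 < ψ y z)
    (hψbdd : ∃ K, ∀ y z, ψ y z ≤ K)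
    (hψcont : Continuous fun p : EuclideanSpace ℝ (Fin dim) × EuclideanSpace ℝ (Fin dim) => ψ p.1 p.2)
    (α : ℝ → ℝ) (hαcont : Continuous α) (hα01 : ∀ t, α t ∈ Set.Icc (0:ℝ) 1)
    (x : Fin N → ℝ → EuclideanSpace ℝ (Fin dim))
    (hxcont : ∀ i, ContinuousOn (x i) (Set.Ici (-τ)))
    (hode : ∀ i t, 0 < t → HasDerivAt (x i)
      ((α t / ((N : ℝ) - 1)) •
        ∑ j ∈ Finset.univ.filter (fun j => j ≠ i),
          ψ (x i t) (x j (t - τ)) • (x j (t - τ) - x i t)) t)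
    (T abar : ℝ) (hT : 0 < T) (habar : 0 < abar)
    (tseq : ℕ → ℝ) (ht0 : tseq 0 = 0) (htmono : StrictMono tseq)
    (hgap : ∀ n : ℕ, τ ≤ tseq (n + 1) - tseq n ∧ tseq (n + 1) - tseq n ≤ T)
    (hint : ∀ n : ℕ, abar ≤ ∫ t in (tseq n)..(tseq (n + 1)), α t)
    (diam : ℝ → ℝ) (hdiam : ∀ t, diam t = ⨆ i, ⨆ j, ‖x i t - x j t‖)
    (D0 : ℝ)
    (hD0 : D0 = ⨆ i, ⨆ j, ⨆ r : Set.Icc (-τ) (0:ℝ), ⨆ s : Set.Icc (-τ) (0:ℝ),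
      ‖x i (r : ℝ) - x j (s : ℝ)‖) :
    ∃ γ : ℝ, 0 < γ ∧ ∀ t : ℝ, 0 ≤ t →
      diam t ≤ D0 * Real.exp (-γ * (t - 3 * T + τ)) := by
  classical
  haveI hNE : Nonempty (Fin N) := ⟨⟨0, by omega⟩⟩
  obtain ⟨K, hK⟩ := hψbdd
  have hK0 : 0 < K := lt_of_lt_of_le (hψpos 0 0) (hK 0 0)
  have hN2 : (2:ℝ) ≤ (N:ℝ) := by exact_mod_cast hN
  have hN1 : (0:ℝ) < (N:ℝ) - 1 := by linarith
  have hNpos : 0 < N := by omega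
  have hcard : ∀ i : Fin N, ((Finset.univ.filter (fun j => j ≠ i)).card : ℝ) = (N:ℝ) - 1 := by
    intro i
    have hNpos' : 1 ≤ N := by omega
    rw [Finset.filter_ne', Finset.card_erase_of_mem (Finset.mem_univ i), Finset.card_univ,
      Fintype.card_fin, Nat.cast_sub hNpos', Nat.cast_one]
  have hτT : τ ≤ T := by have h := hgap 0; linarith [h.1, h.2]
  have htnn : ∀ n, 0 ≤ tseq n := by
    intro n; rw [← ht0]; exact htmono.monotone (Nat.zero_le n)
  have htub : ∀ n : ℕ, tseq n ≤ n * T := by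
    intro n
    induction n with
    | zero => simp [ht0]
    | succ n ih =>
      have h := (hgap n).2
      push_cast
      push_cast at ih
      linarith
  have hinvW : ∀ (v : EuclideanSpace ℝ (Fin dim)) (a : ℝ), 0 ≤ a → ∀ M : ℝ,
      (∀ j s, s ∈ Set.Icc (a-τ) a → ⟪v, x j s⟫ ≤ M) →
      ∀ i t, a - τ ≤ t → ⟪v, x i t⟫ ≤ M :=
    fun v a ha M hM => hk_inv hτ hψpos hK0 hα01 hxcont hode hN1 v a ha M hM
  have hmemW : ∀ (v : EuclideanSpace ℝ (Fin dim)) (a : ℝ), 0 ≤ a → ∀ m : ℝ,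
      (∀ j s, s ∈ Set.Icc (a-τ) a → m ≤ ⟪v, x j s⟫) →
      ∀ i t, a ≤ t → m + (⟪v, x i a⟫ - m) * Real.exp (-(K * (t - a))) ≤ ⟪v, x i t⟫ :=
    fun v a ha m hm => hk_mem hτ hψpos hK hK0 hα01 hxcont hode hN1 hinvW v a ha m hm
  -- uniform bound R
  obtain ⟨R, hR0, hRe⟩ : ∃ R : ℝ, 0 ≤ R ∧ ∀ (j : Fin N) (s : ℝ),
      s ∈ Set.Icc (-τ) (0:ℝ) → ‖x j s‖ ≤ R := by
    have hbd : ∀ j : Fin N, ∃ Rj, ∀ s ∈ Set.Icc (-τ) (0:ℝ), ‖x j s‖ ≤ Rj := fun j =>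
      isCompact_Icc.exists_bound_of_continuousOn ((hxcont j).mono (fun s hs => hs.1))
    choose Rf hRf using hbd
    refine ⟨max 0 (Finset.univ.sup' ⟨⟨0, hNpos⟩, Finset.mem_univ _⟩ Rf), le_max_left _ _, ?_⟩
    intro j s hs
    exact (hRf j s hs).trans ((Finset.le_sup' Rf (Finset.mem_univ j)).trans (le_max_right _ _))
  have hball : ∀ (i : Fin N) (t : ℝ), -τ ≤ t → ‖x i t‖ ≤ R := by
    intro i t ht
    by_cases hv : x i t = 0
    · rw [hv, norm_zero]; exact hR0
    have hMv : ∀ (j : Fin N) (s : ℝ), s ∈ Set.Icc ((0:ℝ)-τ) 0 → ⟪x i t, x j s⟫ ≤ ‖x i t‖ * R := by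
      intro j s hs
      rw [zero_sub] at hs
      calc ⟪x i t, x j s⟫ ≤ ‖x i t‖ * ‖x j s‖ := real_inner_le_norm _ _
      _ ≤ ‖x i t‖ * R := mul_le_mul_of_nonneg_left (hRe j s hs) (norm_nonneg _)
    have h2 := hinvW (x i t) 0 le_rfl (‖x i t‖ * R) hMv i t (by linarith)
    rw [real_inner_self_eq_norm_mul_norm] at h2
    have hn : 0 < ‖x i t‖ := norm_pos_iff.mpr hv
    exact le_of_mul_le_mul_left (by linarith [h2]) hn
  -- ψ₀
  obtain ⟨yz, hyz, hminB⟩ := ((isCompact_closedBall (0 : EuclideanSpace ℝ (Fin dim)) R).prod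
    (isCompact_closedBall (0 : EuclideanSpace ℝ (Fin dim)) R)).exists_isMinOn
    ⟨(0,0), by simp [hR0]⟩ hψcont.continuousOn
  set ψ₀ := ψ yz.1 yz.2 with hψ₀def
  have hψ₀pos : 0 < ψ₀ := hψpos _ _
  have hψ₀le : ∀ y z, ‖y‖ ≤ R → ‖z‖ ≤ R → ψ₀ ≤ ψ y z := by
    intro y z hy hz
    have hmem2 : (y, z) ∈ (Metric.closedBall (0 : EuclideanSpace ℝ (Fin dim)) R) ×ˢ
        (Metric.closedBall (0 : EuclideanSpace ℝ (Fin dim)) R) :=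
      ⟨by simpa [Metric.mem_closedBall, dist_zero_right] using hy,
       by simpa [Metric.mem_closedBall, dist_zero_right] using hz⟩
    exact hminB hmem2
  -- constants
  set β₀ := min 1 (ψ₀ * abar / ((N:ℝ)-1)) with hβ₀def
  have hβ₀pos : 0 < β₀ := lt_min one_pos (by positivity)
  have hβ₀le1 : β₀ ≤ 1 := min_le_left _ _
  set E3 := Real.exp (-(K * (3*T))) with hE3def
  have hE3pos : 0 < E3 := Real.exp_pos _
  have hE3lt1 : E3 < 1 := by
    rw [hE3def, Real.exp_lt_one_iff]
    nlinarith [hK0, hT]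
  set β := β₀ * E3 with hβdef
  have hβpos : 0 < β := mul_pos hβ₀pos hE3pos
  have hβlt1 : β < 1 := by
    calc β ≤ 1 * E3 := mul_le_mul_of_nonneg_right hβ₀le1 hE3pos.le
    _ = E3 := one_mul _
    _ < 1 := hE3lt1
  -- contraction over three WF intervals
  have hcontr : ∀ (n : ℕ) (C : ℝ), 0 ≤ C →
      (∀ (i j : Fin N) (s t : ℝ), s ∈ Set.Icc (tseq n - τ) (tseq n) →
        t ∈ Set.Icc (tseq n - τ) (tseq n) → ‖x i s - x j t‖ ≤ C) →
      ∀ (i j : Fin N) (s t : ℝ), s ∈ Set.Icc (tseq (n+3) - τ) (tseq (n+3)) →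
        t ∈ Set.Icc (tseq (n+3) - τ) (tseq (n+3)) → ‖x i s - x j t‖ ≤ (1-β)*C := by
    intro n C hC hw i j s t hs ht
    have ha0 : 0 ≤ tseq n := htnn n
    have hg1 := hgap n
    have hg2 := hgap (n+1)
    have hg3 := hgap (n+2)
    have hia : n+1+1 = n+2 := by omega
    have hidx : n+2+1 = n+3 := by omega
    rw [hia] at hg2
    rw [hidx] at hg3
    have hBs : tseq (n+2) ≤ s := by linarith [hs.1, hg3.1]
    have hBt : tseq (n+2) ≤ t := by linarith [ht.1, hg3.1]
    have hs3T : s - tseq n ≤ 3*T := by linarith [hs.2, hg1.2, hg2.2, hg3.2]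
    have ht3T : t - tseq n ≤ 3*T := by linarith [ht.2, hg1.2, hg2.2, hg3.2]
    by_cases hv0 : x i s - x j t = 0
    · rw [hv0, norm_zero]
      exact mul_nonneg (by linarith) hC
    set v := x i s - x j t with hvdef
    obtain ⟨kM, rM, hrM, hMx⟩ := hk_max hNpos hxcont v (tseq n - τ) (tseq n)
      (by linarith) (by linarith)
    obtain ⟨km, rm, hrm, hmx⟩ := hk_max hNpos hxcont (-v) (tseq n - τ) (tseq n)
      (by linarith) (by linarith)
    set M := ⟪v, x kM rM⟫ with hMdef
    set m' := ⟪v, x km rm⟫ with hm'def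
    have hmlow : ∀ (j' : Fin N) (s' : ℝ), s' ∈ Set.Icc (tseq n - τ) (tseq n) →
        m' ≤ ⟪v, x j' s'⟫ := by
      intro j' s' hs'
      have h := hmx j' s' hs'
      rw [inner_neg_left, inner_neg_left] at h
      linarith
    have hMm : M - m' ≤ ‖v‖ * C := by
      have h1 : M - m' = ⟪v, x kM rM - x km rm⟫ := by rw [inner_sub_right]
      rw [h1]
      calc ⟪v, x kM rM - x km rm⟫ ≤ ‖v‖ * ‖x kM rM - x km rm‖ := real_inner_le_norm _ _
      _ ≤ ‖v‖ * C := mul_le_mul_of_nonneg_left (hw kM km rM rm hrM hrm) (norm_nonneg _)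
    set j₀ : Fin N := ⟨0, hNpos⟩ with hj₀def
    have hj₀win : tseq n ∈ Set.Icc (tseq n - τ) (tseq n) := ⟨by linarith, le_rfl⟩
    have hp : 0 ≤ ⟪v, x j₀ (tseq n)⟫ - m' := by linarith [hmlow j₀ (tseq n) hj₀win]
    have hq : 0 ≤ M - ⟪v, x j₀ (tseq n)⟫ := by linarith [hMx j₀ (tseq n) hj₀win]
    have hαint1 := hint (n+1)
    rw [hia] at hαint1
    have hpull1 := hk_pull hτ hψpos hK hK0 hαcont hα01 hxcont hode hN1 hcard habar
      hψ₀pos hψ₀le hball hinvW hmemW (tseq n) (tseq (n+1)) (tseq (n+2)) ha0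
      (by linarith [hg1.1]) (by linarith [hg2.1]) hαint1 v m' hmlow j₀ j t hBt
    have hpull2 := hk_pull hτ hψpos hK hK0 hαcont hα01 hxcont hode hN1 hcard habar
      hψ₀pos hψ₀le hball hinvW hmemW (tseq n) (tseq (n+1)) (tseq (n+2)) ha0
      (by linarith [hg1.1]) (by linarith [hg2.1]) hαint1 (-v) (-M)
      (fun j' s' hs' => by rw [inner_neg_left]; linarith [hMx j' s' hs']) j₀ i s hBs
    rw [inner_neg_left, inner_neg_left] at hpull2
    have hEs : E3 ≤ Real.exp (-(K * (s - tseq n))) := by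
      rw [hE3def]; apply Real.exp_le_exp.mpr; nlinarith [hK0.le, hs3T]
    have hEt : E3 ≤ Real.exp (-(K * (t - tseq n))) := by
      rw [hE3def]; apply Real.exp_le_exp.mpr; nlinarith [hK0.le, ht3T]
    have e1 : β₀ * E3 * (⟪v, x j₀ (tseq n)⟫ - m')
        ≤ β₀ * Real.exp (-(K * (t - tseq n))) * (⟪v, x j₀ (tseq n)⟫ - m') :=
      mul_le_mul_of_nonneg_right (mul_le_mul_of_nonneg_left hEt hβ₀pos.le) hp
    have e2 : β₀ * E3 * (M - ⟪v, x j₀ (tseq n)⟫)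
        ≤ β₀ * Real.exp (-(K * (s - tseq n))) * (M - ⟪v, x j₀ (tseq n)⟫) :=
      mul_le_mul_of_nonneg_right (mul_le_mul_of_nonneg_left hEs hβ₀pos.le) hq
    have hsq : ‖v‖ * ‖v‖ ≤ (1-β) * (M - m') := by
      have hvs : ⟪v, v⟫ = ⟪v, x i s⟫ - ⟪v, x j t⟫ := by
        nth_rewrite 2 [hvdef]
        rw [inner_sub_right]
      rw [← real_inner_self_eq_norm_mul_norm, hvs]
      nlinarith [hpull1, hpull2, e1, e2]
    have hvpos : 0 < ‖v‖ := norm_pos_iff.mpr hv0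
    have h2 : (1-β) * (M - m') ≤ (1-β) * (‖v‖ * C) :=
      mul_le_mul_of_nonneg_left hMm (by linarith)
    have h3 : ‖v‖ * ‖v‖ ≤ ((1-β)*C) * ‖v‖ := by nlinarith [hsq, h2]
    exact le_of_mul_le_mul_right (by linarith [h3]) hvpos
  -- pairwise invariance
  have hpair : ∀ (n : ℕ) (C : ℝ), 0 ≤ C →
      (∀ (i j : Fin N) (s t : ℝ), s ∈ Set.Icc (tseq n - τ) (tseq n) →
        t ∈ Set.Icc (tseq n - τ) (tseq n) → ‖x i s - x j t‖ ≤ C) →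
      ∀ (i j : Fin N) (s t : ℝ), tseq n - τ ≤ s → tseq n - τ ≤ t → ‖x i s - x j t‖ ≤ C := by
    intro n C hC hw i j s t hs ht
    have ha0 : 0 ≤ tseq n := htnn n
    by_cases hv0 : x i s - x j t = 0
    · rw [hv0, norm_zero]; exact hC
    set v := x i s - x j t with hvdef
    obtain ⟨kM, rM, hrM, hMx⟩ := hk_max hNpos hxcont v (tseq n - τ) (tseq n)
      (by linarith) (by linarith)
    obtain ⟨km, rm, hrm, hmx⟩ := hk_max hNpos hxcont (-v) (tseq n - τ) (tseq n)
      (by linarith) (by linarith)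
    set M := ⟪v, x kM rM⟫ with hMdef
    set m' := ⟪v, x km rm⟫ with hm'def
    have hMm : M - m' ≤ ‖v‖ * C := by
      have h1 : M - m' = ⟪v, x kM rM - x km rm⟫ := by rw [inner_sub_right]
      rw [h1]
      calc ⟪v, x kM rM - x km rm⟫ ≤ ‖v‖ * ‖x kM rM - x km rm‖ := real_inner_le_norm _ _
      _ ≤ ‖v‖ * C := mul_le_mul_of_nonneg_left (hw kM km rM rm hrM hrm) (norm_nonneg _)
    have h1 : ⟪v, x i s⟫ ≤ M := hinvW v (tseq n) ha0 M (fun j' s' hs' => hMx j' s' hs') i s hs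
    have h2 : m' ≤ ⟪v, x j t⟫ := by
      have h := hinvW (-v) (tseq n) ha0 (-m')
        (fun j' s' hs' => by
          have hh := hmx j' s' hs'
          rw [inner_neg_left, inner_neg_left] at hh
          rw [inner_neg_left]
          linarith) j t ht
      rw [inner_neg_left] at h
      linarith
    have hsq : ‖v‖ * ‖v‖ ≤ ‖v‖ * C := by
      have hvs : ⟪v, v⟫ = ⟪v, x i s⟫ - ⟪v, x j t⟫ := by
        nth_rewrite 2 [hvdef]
        rw [inner_sub_right]
      rw [← real_inner_self_eq_norm_mul_norm, hvs]
      linarith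
    have hvpos : 0 < ‖v‖ := norm_pos_iff.mpr hv0
    exact le_of_mul_le_mul_left (by linarith [hsq]) hvpos
  -- base case
  have hbase : ∀ (i j : Fin N) (s t : ℝ), s ∈ Set.Icc (tseq 0 - τ) (tseq 0) →
      t ∈ Set.Icc (tseq 0 - τ) (tseq 0) → ‖x i s - x j t‖ ≤ D0 := by
    intro i j s t hs ht
    rw [ht0, zero_sub] at hs ht
    haveI : Nonempty ↑(Set.Icc (-τ) (0:ℝ)) := ⟨⟨0, by constructor <;> linarith⟩⟩
    have hnb : ∀ (i' j' : Fin N) (r' s' : ℝ), r' ∈ Set.Icc (-τ) (0:ℝ) →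
        s' ∈ Set.Icc (-τ) (0:ℝ) → ‖x i' r' - x j' s'‖ ≤ R + R := by
      intro i' j' r' s' hr' hs'
      calc ‖x i' r' - x j' s'‖ ≤ ‖x i' r'‖ + ‖x j' s'‖ := norm_sub_le _ _
      _ ≤ R + R := add_le_add (hRe i' r' hr') (hRe j' s' hs')
    have hb1 : ∀ (i' j' : Fin N) (r' : Set.Icc (-τ) (0:ℝ)),
        BddAbove (Set.range fun s' : Set.Icc (-τ) (0:ℝ) => ‖x i' ↑r' - x j' ↑s'‖) := by
      intro i' j' r'
      refine ⟨R + R, ?_⟩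
      rintro _ ⟨s', rfl⟩
      exact hnb i' j' r' s' r'.2 s'.2
    have hv1 : ∀ (i' j' : Fin N) (r' : Set.Icc (-τ) (0:ℝ)),
        (⨆ s' : Set.Icc (-τ) (0:ℝ), ‖x i' ↑r' - x j' ↑s'‖) ≤ R + R :=
      fun i' j' r' => ciSup_le (fun s' => hnb i' j' r' s' r'.2 s'.2)
    have hb2 : ∀ (i' j' : Fin N), BddAbove (Set.range fun r' : Set.Icc (-τ) (0:ℝ) =>
        ⨆ s' : Set.Icc (-τ) (0:ℝ), ‖x i' ↑r' - x j' ↑s'‖) := by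
      intro i' j'
      refine ⟨R + R, ?_⟩
      rintro _ ⟨r', rfl⟩
      exact hv1 i' j' r'
    have hv2 : ∀ (i' j' : Fin N),
        (⨆ r' : Set.Icc (-τ) (0:ℝ), ⨆ s' : Set.Icc (-τ) (0:ℝ), ‖x i' ↑r' - x j' ↑s'‖) ≤ R + R :=
      fun i' j' => ciSup_le (fun r' => hv1 i' j' r')
    have hb3 : ∀ i' : Fin N, BddAbove (Set.range fun j' : Fin N =>
        ⨆ r' : Set.Icc (-τ) (0:ℝ), ⨆ s' : Set.Icc (-τ) (0:ℝ), ‖x i' ↑r' - x j' ↑s'‖) := by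
      intro i'
      refine ⟨R + R, ?_⟩
      rintro _ ⟨j', rfl⟩
      exact hv2 i' j'
    have hv3 : ∀ i' : Fin N, (⨆ j' : Fin N, ⨆ r' : Set.Icc (-τ) (0:ℝ),
        ⨆ s' : Set.Icc (-τ) (0:ℝ), ‖x i' ↑r' - x j' ↑s'‖) ≤ R + R :=
      fun i' => ciSup_le (fun j' => hv2 i' j')
    have hb4 : BddAbove (Set.range fun i' : Fin N => ⨆ j' : Fin N,
        ⨆ r' : Set.Icc (-τ) (0:ℝ), ⨆ s' : Set.Icc (-τ) (0:ℝ), ‖x i' ↑r' - x j' ↑s'‖) := by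
      refine ⟨R + R, ?_⟩
      rintro _ ⟨i', rfl⟩
      exact hv3 i'
    have h1 : ‖x i s - x j t‖ ≤ ⨆ s' : Set.Icc (-τ) (0:ℝ), ‖x i s - x j ↑s'‖ :=
      le_ciSup (hb1 i j ⟨s, hs⟩) ⟨t, ht⟩
    have h2 : (⨆ s' : Set.Icc (-τ) (0:ℝ), ‖x i s - x j ↑s'‖)
        ≤ ⨆ r' : Set.Icc (-τ) (0:ℝ), ⨆ s' : Set.Icc (-τ) (0:ℝ), ‖x i ↑r' - x j ↑s'‖ :=
      le_ciSup (f := fun r' : Set.Icc (-τ) (0:ℝ) =>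
        ⨆ s' : Set.Icc (-τ) (0:ℝ), ‖x i ↑r' - x j ↑s'‖) (hb2 i j) ⟨s, hs⟩
    have h3 : (⨆ r' : Set.Icc (-τ) (0:ℝ), ⨆ s' : Set.Icc (-τ) (0:ℝ), ‖x i ↑r' - x j ↑s'‖)
        ≤ ⨆ j' : Fin N, ⨆ r' : Set.Icc (-τ) (0:ℝ), ⨆ s' : Set.Icc (-τ) (0:ℝ), ‖x i ↑r' - x j' ↑s'‖ :=
      le_ciSup (f := fun j' : Fin N => ⨆ r' : Set.Icc (-τ) (0:ℝ),
        ⨆ s' : Set.Icc (-τ) (0:ℝ), ‖x i ↑r' - x j' ↑s'‖) (hb3 i) j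
    have h4 : (⨆ j' : Fin N, ⨆ r' : Set.Icc (-τ) (0:ℝ),
        ⨆ s' : Set.Icc (-τ) (0:ℝ), ‖x i ↑r' - x j' ↑s'‖) ≤ D0 := by
      rw [hD0]
      exact le_ciSup (f := fun i' : Fin N => ⨆ j' : Fin N, ⨆ r' : Set.Icc (-τ) (0:ℝ),
        ⨆ s' : Set.Icc (-τ) (0:ℝ), ‖x i' ↑r' - x j' ↑s'‖) hb4 i
    exact h1.trans (h2.trans (h3.trans h4))
  have hD0nn : 0 ≤ D0 := by
    have h0mem : tseq 0 ∈ Set.Icc (tseq 0 - τ) (tseq 0) := ⟨by linarith, le_rfl⟩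
    have h := hbase ⟨0, hNpos⟩ ⟨0, hNpos⟩ (tseq 0) (tseq 0) h0mem h0mem
    exact le_trans (norm_nonneg _) h
  -- iteration
  have hiter : ∀ k : ℕ, ∀ (i j : Fin N) (s t : ℝ),
      s ∈ Set.Icc (tseq (3*k) - τ) (tseq (3*k)) →
      t ∈ Set.Icc (tseq (3*k) - τ) (tseq (3*k)) → ‖x i s - x j t‖ ≤ D0 * (1-β)^k := by
    intro k
    induction k with
    | zero =>
      intro i j s t hs ht
      simpa using hbase i j s t hs ht
    | succ k ih =>
      have hpk : (0:ℝ) ≤ D0 * (1-β)^k := mul_nonneg hD0nn (pow_nonneg (by linarith) k)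
      have hc' := hcontr (3*k) (D0*(1-β)^k) hpk ih
      have hidx : 3*k+3 = 3*(k+1) := by ring
      rw [hidx] at hc'
      intro i j s t hs ht
      calc ‖x i s - x j t‖ ≤ (1-β)*(D0*(1-β)^k) := hc' i j s t hs ht
      _ = D0 * (1-β)^(k+1) := by ring
  -- conclusion
  have h1β : 0 < 1 - β := by linarith
  have hlogneg : Real.log (1-β) < 0 := Real.log_neg h1β (by linarith)
  set L := Real.log (1-β) with hLdef
  have h3T : (0:ℝ) < 3*T := by linarith
  refine ⟨(-L)/(3*T), div_pos (by linarith) h3T, ?_⟩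
  intro t ht
  set k := ⌊(t+τ)/(3*T)⌋₊ with hkdef
  have hk1 : (k:ℝ) ≤ (t+τ)/(3*T) := Nat.floor_le (by positivity)
  have hk2 : (t+τ)/(3*T) < k+1 := Nat.lt_floor_add_one _
  have hk1' : (k:ℝ)*(3*T) ≤ t+τ := by
    rw [← le_div_iff₀ h3T]; exact hk1
  have hk2' : t+τ < ((k:ℝ)+1)*(3*T) := by
    rw [div_lt_iff₀ h3T] at hk2; linarith [hk2]
  have h3k : tseq (3*k) - τ ≤ t := by
    have h := htub (3*k)
    push_cast at h
    linarith
  have hdb : ∀ i' j' : Fin N, ‖x i' t - x j' t‖ ≤ D0 * (1-β)^k :=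
    fun i' j' => hpair (3*k) (D0*(1-β)^k)
      (mul_nonneg hD0nn (pow_nonneg (by linarith) k)) (hiter k) i' j' t t h3k h3k
  rw [hdiam t]
  have hdle : (⨆ i', ⨆ j', ‖x i' t - x j' t‖) ≤ D0 * (1-β)^k :=
    ciSup_le (fun i' => ciSup_le (fun j' => hdb i' j'))
  refine le_trans hdle ?_
  have hpow : (1-β)^k = Real.exp ((k:ℝ) * L) := by
    calc (1-β)^k = (Real.exp L)^k := by rw [hLdef, Real.exp_log h1β]
    _ = Real.exp ((k:ℝ)*L) := (Real.exp_nat_mul L k).symm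
  apply mul_le_mul_of_nonneg_left _ hD0nn
  rw [hpow]
  apply Real.exp_le_exp.mpr
  have heq : -((-L)/(3*T))*(t - 3*T + τ) = L*(t+τ-3*T)/(3*T) := by
    ring
  rw [heq, le_div_iff₀ h3T]
  nlinarith [mul_nonneg (neg_nonneg.mpr hlogneg.le)
    (by linarith : (0:ℝ) ≤ ((k:ℝ)+1)*(3*T) - (t+τ))]
end

section
/- Let u : [t_{n−1}, t_n] → ℝ be differentiable and satisfy u'(t) ≤ (K − ψ_0 α(t)) Δ − K u(t) for all t, where K, ψ_0, Δ ≥ 0 and α : [t_{n−1}, t_n] → [0,1] is continuous with ∫_{t_{n−1}}^{t_n} α(s) ds ≥ ᾱ and t_n − t_{n−1} ≤ T. Then u(t_n) ≤ e^{−K(t_n − t_{n−1})} u(t_{n−1}) + (1 − ψ_0 e^{−KT} ᾱ − e^{−K(t_n−t_{n−1})}) Δ; in particular, if u(t_{n−1}) ≤ Δ then u(t_n) ≤ (1 − ψ_0 e^{−KT} ᾱ) Δ. -/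
open MeasureTheory intervalIntegral Set Topology

lemma sub_le_integral_of_hasDerivAt (a b : ℝ) (hab : a ≤ b) (g g' φ : ℝ → ℝ)
    (hg : ∀ t ∈ Set.Icc a b, HasDerivAt g (g' t) t)
    (hφ : ContinuousOn φ (Set.Icc a b))
    (hle : ∀ t ∈ Set.Icc a b, g' t ≤ φ t) :
    g b - g a ≤ ∫ s in a..b, φ s := by
  have huIcc : Set.uIcc a b = Set.Icc a b := Set.uIcc_of_le hab
  set F : ℝ → ℝ := fun t => (∫ s in a..t, φ s) - g t with hF
  have hmono : MonotoneOn F (Set.Icc a b) := by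
    apply monotoneOn_of_deriv_nonneg (convex_Icc a b)
    · apply ContinuousOn.sub
      · refine intervalIntegral.continuousOn_primitive_interval ?_ |>.mono (by rw [huIcc])
        rw [huIcc]; exact hφ.integrableOn_Icc
      · exact fun t ht => (hg t ht).continuousAt.continuousWithinAt
    · intro t ht
      rw [interior_Icc] at ht
      have ht' : t ∈ Set.Icc a b := Set.mem_Icc_of_Ioo ht
      have hcont : ContinuousAt φ t := hφ.continuousAt (Icc_mem_nhds ht.1 ht.2)
      have hInt : IntervalIntegrable φ volume a t :=
        (hφ.mono (Set.Icc_subset_Icc le_rfl ht'.2)).intervalIntegrable_of_Icc ht'.1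
      have hmeasAt : StronglyMeasurableAtFilter φ (𝓝 t) volume :=
        ⟨Set.Ioo a b, Ioo_mem_nhds ht.1 ht.2,
          (hφ.mono Set.Ioo_subset_Icc_self).aestronglyMeasurable measurableSet_Ioo⟩
      have hd : HasDerivAt F (φ t - g' t) t :=
        ((integral_hasDerivAt_right hInt hmeasAt hcont).sub (hg t ht'))
      exact hd.differentiableAt.differentiableWithinAt
    · intro t ht
      rw [interior_Icc] at ht
      have ht' : t ∈ Set.Icc a b := Set.mem_Icc_of_Ioo ht
      have hcont : ContinuousAt φ t := hφ.continuousAt (Icc_mem_nhds ht.1 ht.2)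
      have hInt : IntervalIntegrable φ volume a t :=
        (hφ.mono (Set.Icc_subset_Icc le_rfl ht'.2)).intervalIntegrable_of_Icc ht'.1
      have hmeasAt : StronglyMeasurableAtFilter φ (𝓝 t) volume :=
        ⟨Set.Ioo a b, Ioo_mem_nhds ht.1 ht.2,
          (hφ.mono Set.Ioo_subset_Icc_self).aestronglyMeasurable measurableSet_Ioo⟩
      have hd : HasDerivAt F (φ t - g' t) t :=
        ((integral_hasDerivAt_right hInt hmeasAt hcont).sub (hg t ht'))
      rw [hd.deriv]
      linarith [hle t ht']
  have := hmono (Set.left_mem_Icc.2 hab) (Set.right_mem_Icc.2 hab) hab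
  simp only [hF, intervalIntegral.integral_same] at this
  linarith

/-- abstract contraction estimate: if u' ≤ (K - ψ₀ α(t)) Δ - K u on
[a,b] with ∫ α ≥ ᾱ and b - a ≤ T, then
u(b) ≤ e^{-K(b-a)} u(a) + (1 - ψ₀ e^{-KT} ᾱ - e^{-K(b-a)}) Δ; in particular
u(a) ≤ Δ implies u(b) ≤ (1 - ψ₀ e^{-KT} ᾱ) Δ. -/
theorem contraction_differential_inequality
    (K ψ0 Δ a b T abar : ℝ)
    (hK : 0 ≤ K) (hψ0 : 0 ≤ ψ0) (hΔ : 0 ≤ Δ) (hab : a ≤ b) (hT : b - a ≤ T)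
    (α : ℝ → ℝ) (hαcont : ContinuousOn α (Set.Icc a b))
    (hα01 : ∀ t ∈ Set.Icc a b, α t ∈ Set.Icc (0:ℝ) 1)
    (hint : abar ≤ ∫ s in a..b, α s)
    (u u' : ℝ → ℝ)
    (hderiv : ∀ t ∈ Set.Icc a b, HasDerivAt u (u' t) t)
    (hineq : ∀ t ∈ Set.Icc a b, u' t ≤ (K - ψ0 * α t) * Δ - K * u t) :
    u b ≤ Real.exp (-K * (b - a)) * u a
        + (1 - ψ0 * Real.exp (-K * T) * abar - Real.exp (-K * (b - a))) * Δ ∧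
      (u a ≤ Δ → u b ≤ (1 - ψ0 * Real.exp (-K * T) * abar) * Δ) := by
  set g : ℝ → ℝ := fun t => Real.exp (K * t) * (u t - Δ) with hg
  set g' : ℝ → ℝ := fun t => K * Real.exp (K * t) * (u t - Δ) + Real.exp (K * t) * u' t with hg'
  set φ : ℝ → ℝ := fun t => Real.exp (K * t) * (-(ψ0 * α t * Δ)) with hφdef
  have hgderiv : ∀ t ∈ Set.Icc a b, HasDerivAt g (g' t) t := by
    intro t ht
    have h1 : HasDerivAt (fun t => Real.exp (K * t)) (K * Real.exp (K * t)) t := by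
      have := ((hasDerivAt_id t).const_mul K).exp
      simpa [mul_comm] using this
    exact h1.mul ((hderiv t ht).sub_const Δ)
  have hφcont : ContinuousOn φ (Set.Icc a b) := by
    apply ContinuousOn.mul
    · exact (Real.continuous_exp.comp (continuous_const.mul continuous_id)).continuousOn
    · exact ((continuousOn_const.mul hαcont).mul continuousOn_const).neg
  have hle : ∀ t ∈ Set.Icc a b, g' t ≤ φ t := by
    intro t ht
    have h := hineq t ht
    have he : (0:ℝ) < Real.exp (K * t) := Real.exp_pos _
    simp only [hg', hφdef]
    nlinarith [mul_le_mul_of_nonneg_left h he.le]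
  have key : g b - g a ≤ ∫ s in a..b, φ s :=
    sub_le_integral_of_hasDerivAt a b hab g g' φ hgderiv hφcont hle
  -- bound the integral
  have hInt1 : ∫ s in a..b, φ s = -(ψ0 * Δ * ∫ s in a..b, Real.exp (K * s) * α s) := by
    rw [← intervalIntegral.integral_const_mul, ← intervalIntegral.integral_neg]
    apply intervalIntegral.integral_congr
    intro s _
    simp only [hφdef]
    ring
  set I : ℝ := ∫ s in a..b, Real.exp (K * s) * α s with hI
  have hexpcont : ContinuousOn (fun s => Real.exp (K * s)) (Set.Icc a b) :=
    (Real.continuous_exp.comp (continuous_const.mul continuous_id)).continuousOn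
  have hαint : IntervalIntegrable α volume a b := hαcont.intervalIntegrable_of_Icc hab
  have heαint : IntervalIntegrable (fun s => Real.exp (K * s) * α s) volume a b :=
    (hexpcont.mul hαcont).intervalIntegrable_of_Icc hab
  have hI1 : Real.exp (K * a) * (∫ s in a..b, α s) ≤ I := by
    rw [← intervalIntegral.integral_const_mul]
    apply intervalIntegral.integral_mono_on hab (hαint.const_mul _) heαint
    intro s hs
    have h0 : 0 ≤ α s := (hα01 s hs).1
    have : Real.exp (K * a) ≤ Real.exp (K * s) :=
      Real.exp_le_exp.2 (mul_le_mul_of_nonneg_left hs.1 hK)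
    exact mul_le_mul_of_nonneg_right this h0
  have hαnn : 0 ≤ ∫ s in a..b, α s := by
    apply intervalIntegral.integral_nonneg hab
    intro s hs; exact (hα01 s hs).1
  have hInn : 0 ≤ I := le_trans (by positivity) hI1
  -- key scalar bound:  ψ0 * Δ * exp(K*b - K*T) * abar ≤ ψ0 * Δ * I
  have hbound : ψ0 * Δ * (Real.exp (K * b) * Real.exp (-K * T) * abar) ≤ ψ0 * Δ * I := by
    rcases le_or_gt abar 0 with h | h
    · have he : (0:ℝ) ≤ Real.exp (K * b) * Real.exp (-K * T) := by positivity
      have h1 : Real.exp (K * b) * Real.exp (-K * T) * abar ≤ 0 :=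
        mul_nonpos_of_nonneg_of_nonpos he h
      have h2 : ψ0 * Δ * (Real.exp (K * b) * Real.exp (-K * T) * abar) ≤ 0 :=
        mul_nonpos_of_nonneg_of_nonpos (by positivity) h1
      exact le_trans h2 (by positivity)
    · have he : Real.exp (K * b) * Real.exp (-K * T) ≤ Real.exp (K * a) := by
        rw [← Real.exp_add]
        apply Real.exp_le_exp.2
        nlinarith
      have h1 : Real.exp (K * b) * Real.exp (-K * T) * abar ≤ Real.exp (K * a) * abar :=
        mul_le_mul_of_nonneg_right he h.le
      have h2 : Real.exp (K * a) * abar ≤ Real.exp (K * a) * (∫ s in a..b, α s) :=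
        mul_le_mul_of_nonneg_left hint (Real.exp_pos _).le
      have := le_trans h1 (le_trans h2 hI1)
      exact mul_le_mul_of_nonneg_left this (by positivity)
  rw [hInt1] at key
  -- so  g b ≤ g a - ψ0 Δ exp(Kb) exp(-KT) abar
  have key2 : Real.exp (K * b) * (u b - Δ) ≤ Real.exp (K * a) * (u a - Δ)
      - ψ0 * Δ * (Real.exp (K * b) * Real.exp (-K * T) * abar) := by
    simp only [hg] at key
    linarith
  have hmain : u b ≤ Real.exp (-K * (b - a)) * u a
      + (1 - ψ0 * Real.exp (-K * T) * abar - Real.exp (-K * (b - a))) * Δ := by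
    have heb : (0:ℝ) < Real.exp (K * b) := Real.exp_pos _
    have hdiv := div_le_div_of_nonneg_right key2 heb.le
    have hexps : Real.exp (K * a) / Real.exp (K * b) = Real.exp (-K * (b - a)) := by
      rw [← Real.exp_sub]; ring_nf
    have hdiv2 : u b - Δ ≤ Real.exp (-K * (b - a)) * (u a - Δ)
        - ψ0 * Δ * (Real.exp (-K * T) * abar) := by
      have e1 : Real.exp (K * b) * (u b - Δ) / Real.exp (K * b) = u b - Δ := by
        field_simp
      have e2 : (Real.exp (K * a) * (u a - Δ)
          - ψ0 * Δ * (Real.exp (K * b) * Real.exp (-K * T) * abar)) / Real.exp (K * b)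
          = Real.exp (-K * (b - a)) * (u a - Δ) - ψ0 * Δ * (Real.exp (-K * T) * abar) := by
        rw [← hexps]; field_simp
      rw [e1, e2] at hdiv
      exact hdiv
    nlinarith [hdiv2]
  refine ⟨hmain, fun hua => ?_⟩
  have he : (0:ℝ) < Real.exp (-K * (b - a)) := Real.exp_pos _
  nlinarith [mul_le_mul_of_nonneg_left hua he.le]
end
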